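/- Let I be a finite set. Define τ_j : I^{ℤ₊} → ℕ ∪ {∞} by τ_j(x) = inf{k ≥ 0 : Σ_{i=0}^{k−1} x_{i,0} = j}, where the first coordinate x_{i,0} ∈ {−1,1}, and let E = {x ∈ I^{ℤ₊} : τ_j(x) < ∞ for all j ∈ ℤ}. Then the metric d(x,x') = Σ_{k≥0} 2^{−k} 1_{x_k ≠ x'_k} + Σ_{j∈ℤ} 2^{−|j|} (|τ_j(x) − τ_j(x')| ∧ 1) metrizes the topology of pointwise convergence on E, and (E,d) is a complete separable metric space; in particular E is Polish. -/

import Mathlib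

open MeasureTheory Filter

/-- The sign set {−1,1} ⊂ ℤ, with its (discrete) subspace topology. -/
abbrev Sgn : Type := {z : ℤ // z = -1 ∨ z = 1}

/-- The finite alphabet I = {−1,1} × {0,1,2} × {0,1,2}. -/
abbrev Alph : Type := Sgn × Fin 3 × Fin 3

/-- τ_j(x) = inf{k ≥ 0 : Σ_{i=0}^{k−1} x_{i,0} = j} ∈ ℕ ∪ {∞}. -/
noncomputable def tau (j : ℤ) (x : ℕ → Alph) : ℕ∞ :=
  sInf {c : ℕ∞ | ∃ m : ℕ, c = (m : ℕ∞) ∧ (∑ i ∈ Finset.range m, ((x i).1 : ℤ)) = j}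

/-- E = {x ∈ I^{ℤ₊} : τ_j(x) < ∞ for all j ∈ ℤ}, with the topology of pointwise
convergence inherited from the product. -/
abbrev SceneryE : Type := {x : ℕ → Alph // ∀ j : ℤ, tau j x ≠ ⊤}

/-- The metric d(x,x') = Σ_{k≥0} 2^{−k} 1_{x_k ≠ x'_k}
+ Σ_{j∈ℤ} 2^{−|j|} (|τ_j(x) − τ_j(x')| ∧ 1). -/
noncomputable def sceneryDist (x x' : SceneryE) : ℝ :=
  (∑' k : ℕ, (2 : ℝ) ^ (-(k : ℤ)) * (if x.1 k = x'.1 k then 0 else 1)) +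
  ∑' j : ℤ, (2 : ℝ) ^ (-|j|) *
    ((((tau j x.1 - tau j x'.1) ⊔ (tau j x'.1 - tau j x.1)) ⊓ 1).toNat : ℝ)

namespace Stmt5Aux

def hits (j : ℤ) (x : ℕ → Alph) (m : ℕ) : Prop :=
  (∑ i ∈ Finset.range m, ((x i).1 : ℤ)) = j

lemma tau_eq_of_min {j : ℤ} {x : ℕ → Alph} {m : ℕ}
    (h : hits j x m) (hmin : ∀ n < m, ¬ hits j x n) : tau j x = m := by
  refine le_antisymm (sInf_le ⟨m, rfl, h⟩) (le_sInf ?_)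
  rintro c ⟨n, rfl, hn⟩
  exact_mod_cast not_lt.1 fun hlt => hmin n hlt hn

lemma tau_spec {j : ℤ} {x : ℕ → Alph} (h : tau j x ≠ ⊤) :
    ∃ m : ℕ, tau j x = m ∧ hits j x m ∧ ∀ n < m, ¬ hits j x n := by
  classical
  have hne : ∃ m : ℕ, hits j x m := by
    by_contra hc
    push_neg at hc
    exact h (sInf_eq_top.2 (by rintro c ⟨n, rfl, hn⟩; exact absurd hn (hc n)))
  refine ⟨Nat.find hne, ?_, Nat.find_spec hne, fun n hn => Nat.find_min hne hn⟩
  exact tau_eq_of_min (Nat.find_spec hne) fun n hn => Nat.find_min hne hn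

lemma hits_congr {j : ℤ} {m n : ℕ} {x y : ℕ → Alph}
    (hagree : ∀ i < m, y i = x i) (hn : n ≤ m) : hits j x n ↔ hits j y n := by
  have hs : (∑ i ∈ Finset.range n, ((y i).1 : ℤ)) = ∑ i ∈ Finset.range n, ((x i).1 : ℤ) :=
    Finset.sum_congr rfl fun i hi => by
      rw [hagree i (lt_of_lt_of_le (Finset.mem_range.1 hi) hn)]
  unfold hits
  rw [hs]

lemma tau_congr {j : ℤ} {x y : ℕ → Alph} {m : ℕ} (hx : tau j x = m)
    (hagree : ∀ i < m, y i = x i) : tau j y = m := by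
  obtain ⟨m', hm', hhit, hmin⟩ := tau_spec (by rw [hx]; exact ENat.coe_ne_top m)
  have hmm : m' = m := by
    rw [hx] at hm'; exact_mod_cast hm'.symm
  subst hmm
  exact tau_eq_of_min ((hits_congr hagree le_rfl).1 hhit)
    fun n hn hy => hmin n hn ((hits_congr hagree hn.le).2 hy)

noncomputable def wN (k : ℕ) : ℝ := (2:ℝ) ^ (-(k:ℤ))
noncomputable def wZ (j : ℤ) : ℝ := (2:ℝ) ^ (-|j|)

lemma wN_pos (k : ℕ) : 0 < wN k := zpow_pos two_pos _
lemma wZ_pos (j : ℤ) : 0 < wZ j := zpow_pos two_pos _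
lemma wN_eq (k : ℕ) : wN k = (1/2 : ℝ) ^ k := by
  rw [wN, zpow_neg, zpow_natCast, one_div, inv_pow]
lemma wN_anti {k n : ℕ} (h : k ≤ n) : wN n ≤ wN k := by
  rw [wN_eq, wN_eq]; exact pow_le_pow_of_le_one (by norm_num) (by norm_num) h
lemma summable_wN : Summable wN := by
  rw [show wN = fun k => (1/2:ℝ)^k from funext wN_eq]
  exact summable_geometric_of_lt_one (by norm_num) (by norm_num)
lemma summable_wZ : Summable wZ := by
  apply Summable.of_nat_of_neg <;>
    · convert summable_wN using 2 with n
      all_goals first | rfl | simp [wZ, wN]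
lemma enat_ind (a b : ℕ∞) :
    ((((a - b) ⊔ (b - a)) ⊓ 1).toNat : ℝ) = if a = b then 0 else 1 := by
  rcases eq_or_ne a b with h | h
  · simp [h]
  · have h1 : (1:ℕ∞) ≤ (a - b) ⊔ (b - a) := by
      rcases lt_or_gt_of_ne h with hlt | hlt
      · exact le_sup_of_le_right (ENat.one_le_iff_ne_zero.2
          (by simpa [tsub_eq_zero_iff_le] using not_le.2 hlt))
      · exact le_sup_of_le_left (ENat.one_le_iff_ne_zero.2
          (by simpa [tsub_eq_zero_iff_le] using not_le.2 hlt))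
    rw [inf_eq_right.2 h1, if_neg h]
    simp



noncomputable def fN (x y : SceneryE) (k : ℕ) : ℝ :=
  wN k * (if x.1 k = y.1 k then 0 else 1)
noncomputable def fZ (x y : SceneryE) (j : ℤ) : ℝ :=
  wZ j * (if tau j x.1 = tau j y.1 then 0 else 1)

lemma ite01_nonneg {p : Prop} [Decidable p] : (0:ℝ) ≤ if p then 0 else 1 := by
  split_ifs <;> norm_num
lemma ite01_le_one {p : Prop} [Decidable p] : (if p then (0:ℝ) else 1) ≤ 1 := by
  split_ifs <;> norm_num

lemma fN_nonneg (x y : SceneryE) (k : ℕ) : 0 ≤ fN x y k :=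
  mul_nonneg (wN_pos k).le ite01_nonneg
lemma fZ_nonneg (x y : SceneryE) (j : ℤ) : 0 ≤ fZ x y j :=
  mul_nonneg (wZ_pos j).le ite01_nonneg
lemma fN_le (x y : SceneryE) (k : ℕ) : fN x y k ≤ wN k := by
  simpa [fN] using mul_le_of_le_one_right (wN_pos k).le (ite01_le_one)
lemma fZ_le (x y : SceneryE) (j : ℤ) : fZ x y j ≤ wZ j := by
  simpa [fZ] using mul_le_of_le_one_right (wZ_pos j).le (ite01_le_one)
lemma summable_fN (x y : SceneryE) : Summable (fN x y) :=
  Summable.of_nonneg_of_le (fN_nonneg x y) (fN_le x y) summable_wN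
lemma summable_fZ (x y : SceneryE) : Summable (fZ x y) :=
  Summable.of_nonneg_of_le (fZ_nonneg x y) (fZ_le x y) summable_wZ

lemma dist_eq (x y : SceneryE) :
    sceneryDist x y = (∑' k, fN x y k) + ∑' j, fZ x y j := by
  unfold sceneryDist fN fZ wN wZ
  congr 1
  exact tsum_congr fun j => by rw [enat_ind]

lemma dist_self' (x : SceneryE) : sceneryDist x x = 0 := by
  rw [dist_eq]
  simp [fN, fZ]

lemma dist_comm' (x y : SceneryE) : sceneryDist x y = sceneryDist y x := by
  rw [dist_eq, dist_eq]
  congr 1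
  · refine tsum_congr fun k => ?_
    unfold fN
    by_cases h : x.1 k = y.1 k
    · rw [if_pos h, if_pos h.symm]
    · rw [if_neg h, if_neg fun hh => h hh.symm]
  · refine tsum_congr fun j => ?_
    unfold fZ
    by_cases h : tau j x.1 = tau j y.1
    · rw [if_pos h, if_pos h.symm]
    · rw [if_neg h, if_neg fun hh => h hh.symm]

lemma ite_tri {α : Sort*} (a b c : α) [Decidable (a = c)] [Decidable (a = b)] [Decidable (b = c)] :
    (if a = c then (0:ℝ) else 1) ≤ (if a = b then 0 else 1) + (if b = c then 0 else 1) := by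
  by_cases h1 : a = b
  · subst h1
    by_cases h2 : a = c <;> simp [h2]
  · rw [if_neg h1]
    have h3 := ite01_le_one (p := a = c)
    have h4 := ite01_nonneg (p := b = c)
    linarith

lemma dist_triangle' (x y z : SceneryE) :
    sceneryDist x z ≤ sceneryDist x y + sceneryDist y z := by
  rw [dist_eq, dist_eq, dist_eq]
  have hN : ∑' k, fN x z k ≤ (∑' k, fN x y k) + ∑' k, fN y z k := by
    rw [← Summable.tsum_add (summable_fN x y) (summable_fN y z)]
    refine Summable.tsum_le_tsum (fun k => ?_) (summable_fN x z)
      ((summable_fN x y).add (summable_fN y z))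
    unfold fN
    rw [← mul_add]
    exact mul_le_mul_of_nonneg_left (ite_tri _ _ _) (wN_pos k).le
  have hZ : ∑' j, fZ x z j ≤ (∑' j, fZ x y j) + ∑' j, fZ y z j := by
    rw [← Summable.tsum_add (summable_fZ x y) (summable_fZ y z)]
    refine Summable.tsum_le_tsum (fun j => ?_) (summable_fZ x z)
      ((summable_fZ x y).add (summable_fZ y z))
    unfold fZ
    rw [← mul_add]
    exact mul_le_mul_of_nonneg_left (ite_tri _ _ _) (wZ_pos j).le
  linarith

lemma le_dist_of_ne {x y : SceneryE} {k : ℕ} (h : x.1 k ≠ y.1 k) :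
    wN k ≤ sceneryDist x y := by
  rw [dist_eq]
  have h1 : wN k = fN x y k := by rw [fN, if_neg h, mul_one]
  have h2 : fN x y k ≤ ∑' k, fN x y k := Summable.le_tsum (summable_fN x y) k fun j _ => fN_nonneg x y j
  have h3 : 0 ≤ ∑' j, fZ x y j := tsum_nonneg (fZ_nonneg x y)
  linarith

lemma le_dist_of_tau_ne {x y : SceneryE} {j : ℤ} (h : tau j x.1 ≠ tau j y.1) :
    wZ j ≤ sceneryDist x y := by
  rw [dist_eq]
  have h1 : wZ j = fZ x y j := by rw [fZ, if_neg h, mul_one]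
  have h2 : fZ x y j ≤ ∑' j, fZ x y j := Summable.le_tsum (summable_fZ x y) j fun i _ => fZ_nonneg x y i
  have h3 : 0 ≤ ∑' k, fN x y k := tsum_nonneg (fN_nonneg x y)
  linarith

lemma eq_of_dist_eq_zero' (x y : SceneryE) (h : sceneryDist x y = 0) : x = y := by
  refine Subtype.ext (funext fun k => ?_)
  by_contra hk
  have h1 := le_dist_of_ne hk
  rw [h] at h1
  exact absurd h1 (not_le.2 (wN_pos k))

lemma exists_tail {ι : Type*} [DecidableEq ι] {w : ι → ℝ} (hw : Summable w)
    (h0 : ∀ i, 0 ≤ w i) {ε : ℝ} (hε : 0 < ε) :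
    ∃ s : Finset ι, ∑' i, (if i ∈ s then 0 else w i) < ε := by
  have h2 : ∀ᶠ s : Finset ι in atTop, (∑' i, w i) - ε < ∑ i ∈ s, w i :=
    hw.hasSum.eventually (eventually_gt_nhds (by linarith))
  obtain ⟨s, hs⟩ := h2.exists
  refine ⟨s, ?_⟩
  have hsupp : Summable (fun i => if i ∈ s then w i else 0) :=
    summable_of_ne_finset_zero (s := s) fun i hi => if_neg hi
  have heq : (fun i => if i ∈ s then (0:ℝ) else w i)
      = fun i => w i - (if i ∈ s then w i else 0) := by
    funext i; split_ifs <;> ring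
  rw [heq, Summable.tsum_sub hw hsupp, tsum_eq_sum (s := s) (fun i hi => if_neg hi)]
  have hps : ∑ b ∈ s, (if b ∈ s then w b else 0) = ∑ b ∈ s, w b :=
    Finset.sum_congr rfl fun i hi => if_pos hi
  rw [hps]
  linarith



lemma summable_tail {ι : Type*} [DecidableEq ι] {w : ι → ℝ} (hw : Summable w)
    (h0 : ∀ i, 0 ≤ w i) (s : Finset ι) :
    Summable (fun i => if i ∈ s then (0:ℝ) else w i) :=
  Summable.of_nonneg_of_le (fun i => by split_ifs with h; exacts [le_rfl, h0 i])
    (fun i => by split_ifs with h; exacts [h0 i, le_rfl]) hw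

lemma dist_lt_of_agree (x : SceneryE) {ε : ℝ} (hε : 0 < ε) :
    ∃ M : ℕ, ∀ y : SceneryE, (∀ k < M, y.1 k = x.1 k) → sceneryDist x y < ε := by
  obtain ⟨sN, hsN⟩ := exists_tail summable_wN (fun k => (wN_pos k).le) (half_pos hε)
  obtain ⟨sZ, hsZ⟩ := exists_tail summable_wZ (fun j => (wZ_pos j).le) (half_pos hε)
  set M : ℕ := (sN.sup id + 1) ⊔ (sZ.sup fun j => (tau j x.1).toNat + 1) with hMdef
  refine ⟨M, fun y hy => ?_⟩
  have hNt : ∀ k, fN x y k ≤ (if k ∈ sN then 0 else wN k) := by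
    intro k
    by_cases hk : k ∈ sN
    · have hkM : k < M :=
        lt_of_lt_of_le (Nat.lt_succ_of_le (Finset.le_sup (f := id) hk)) le_sup_left
      have hxy : x.1 k = y.1 k := (hy k hkM).symm
      simp [fN, hxy, hk]
    · rw [if_neg hk]; exact fN_le x y k
  have hZt : ∀ j, fZ x y j ≤ (if j ∈ sZ then 0 else wZ j) := by
    intro j
    by_cases hj : j ∈ sZ
    · have hmle : (tau j x.1).toNat + 1 ≤ M :=
        le_trans (Finset.le_sup (f := fun j => (tau j x.1).toNat + 1) hj) le_sup_right
      have hx' : tau j x.1 = ((tau j x.1).toNat : ℕ∞) := (ENat.coe_toNat (x.2 j)).symm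
      have htau : tau j y.1 = tau j x.1 := by
        refine (tau_congr hx' fun i hi => ?_).trans hx'.symm
        exact hy i (lt_of_lt_of_le hi (Nat.le_of_succ_le hmle))
      simp [fZ, htau.symm, hj]
    · rw [if_neg hj]; exact fZ_le x y j
  have h1 : ∑' k, fN x y k ≤ ∑' k, (if k ∈ sN then (0:ℝ) else wN k) :=
    Summable.tsum_le_tsum hNt (summable_fN x y)
      (summable_tail summable_wN (fun k => (wN_pos k).le) sN)
  have h2 : ∑' j, fZ x y j ≤ ∑' j, (if j ∈ sZ then (0:ℝ) else wZ j) :=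
    Summable.tsum_le_tsum hZt (summable_fZ x y)
      (summable_tail summable_wZ (fun j => (wZ_pos j).le) sZ)
  rw [dist_eq]
  linarith

lemma isOpen_iff' (s : Set SceneryE) :
    IsOpen s ↔ ∀ x ∈ s, ∃ ε > 0, ∀ y, sceneryDist x y < ε → y ∈ s := by
  constructor
  · intro hs x hx
    obtain ⟨U, hU, hUs⟩ := isOpen_induced_iff.1 hs
    have hxU : x.1 ∈ U := by rw [← hUs] at hx; exact hx
    obtain ⟨I, u, hIu, hpi⟩ := isOpen_pi_iff.1 hU x.1 hxU
    refine ⟨wN (I.sup id), wN_pos _, fun y hy => ?_⟩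
    have hagree : ∀ k ∈ I, y.1 k = x.1 k := by
      intro k hk
      by_contra hne
      have hle := le_dist_of_ne (x := x) (y := y) fun h => hne h.symm
      have h2 : wN (I.sup id) ≤ wN k := wN_anti (Finset.le_sup (f := id) hk)
      linarith
    have hymem : y.1 ∈ (↑I : Set ℕ).pi u := fun k hk => by
      rw [hagree k hk]; exact (hIu k hk).2
    have : y.1 ∈ U := hpi hymem
    rw [← hUs]; exact this
  · intro h
    rw [isOpen_iff_mem_nhds]
    intro x hx
    obtain ⟨ε, hε, hball⟩ := h x hx
    obtain ⟨M, hM⟩ := dist_lt_of_agree x hε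
    have hopen : IsOpen {z : ℕ → Alph | ∀ k ∈ Finset.range M, z k = x.1 k} := by
      have heq : {z : ℕ → Alph | ∀ k ∈ Finset.range M, z k = x.1 k}
          = (↑(Finset.range M) : Set ℕ).pi (fun k => {x.1 k}) := by
        ext z; simp [Set.mem_pi]
      rw [heq]
      exact isOpen_set_pi (Finset.range M).finite_toSet fun k _ => isOpen_discrete _
    refine mem_nhds_iff.2
      ⟨Subtype.val ⁻¹' {z | ∀ k ∈ Finset.range M, z k = x.1 k}, ?_, ?_, ?_⟩
    · intro y hy
      exact hball y (hM y fun k hk => hy k (Finset.mem_range.2 hk))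
    · exact hopen.preimage continuous_subtype_val
    · intro k _; rfl

noncomputable def sceneryMetric : MetricSpace SceneryE :=
  MetricSpace.ofDistTopology sceneryDist dist_self' dist_comm' dist_triangle'
    isOpen_iff' eq_of_dist_eq_zero'

lemma complete' : @CompleteSpace SceneryE sceneryMetric.toUniformSpace := by
  letI : MetricSpace SceneryE := sceneryMetric
  have hdist : ∀ a b : SceneryE, dist a b = sceneryDist a b := fun a b => rfl
  apply Metric.complete_of_cauchySeq_tendsto
  intro u hu
  rw [Metric.cauchySeq_iff] at hu
  have hcoord : ∀ k : ℕ, ∃ N, ∀ m ≥ N, ∀ n ≥ N, (u m).1 k = (u n).1 k := by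
    intro k
    obtain ⟨N, hN⟩ := hu (wN k) (wN_pos k)
    refine ⟨N, fun m hm n hn => ?_⟩
    by_contra hne
    have hle := le_dist_of_ne hne
    have h2 := hN m hm n hn
    rw [hdist] at h2
    linarith
  choose NN hNN using hcoord
  set x0 : ℕ → Alph := fun k => (u (NN k)).1 k with hx0
  have hx0eq : ∀ k, ∀ m ≥ NN k, (u m).1 k = x0 k := fun k m hm => hNN k m hm (NN k) le_rfl
  have htauc : ∀ j : ℤ, ∃ N, ∀ m ≥ N, tau j (u m).1 = tau j (u N).1 := by
    intro j
    obtain ⟨N, hN⟩ := hu (wZ j) (wZ_pos j)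
    refine ⟨N, fun m hm => ?_⟩
    by_contra hne
    have hle := le_dist_of_tau_ne hne
    have h2 := hN m hm N le_rfl
    rw [hdist] at h2
    linarith
  choose NZ hNZ using htauc
  have hmem : ∀ j : ℤ, tau j x0 ≠ ⊤ := by
    intro j
    set m : ℕ := (tau j (u (NZ j)).1).toNat with hm
    have hm' : tau j (u (NZ j)).1 = (m : ℕ∞) := (ENat.coe_toNat ((u (NZ j)).2 j)).symm
    set n0 : ℕ := (Finset.range m).sup NN ⊔ NZ j with hn0
    have h1 : tau j (u n0).1 = (m : ℕ∞) := by
      rw [hNZ j n0 le_sup_right]; exact hm'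
    have h2 : tau j x0 = (m : ℕ∞) := by
      refine tau_congr h1 fun i hi => ?_
      exact (hx0eq i n0
        (le_trans (Finset.le_sup (Finset.mem_range.2 hi)) le_sup_left)).symm
    rw [h2]; exact ENat.coe_ne_top m
  refine ⟨⟨x0, hmem⟩, ?_⟩
  rw [Metric.tendsto_atTop]
  intro ε hε
  obtain ⟨M, hM⟩ := dist_lt_of_agree ⟨x0, hmem⟩ hε
  refine ⟨(Finset.range M).sup NN, fun n hn => ?_⟩
  have hlt : sceneryDist ⟨x0, hmem⟩ (u n) < ε :=
    hM (u n) fun k hk => hx0eq k n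
      (le_trans (Finset.le_sup (Finset.mem_range.2 hk)) hn)
  rw [hdist, dist_comm']
  exact hlt

end Stmt5Aux

/-- the metric d metrizes the topology of pointwise convergence on E,
and (E,d) is a complete separable metric space; in particular E is Polish. -/
theorem stmt5 :
    (∃ m : MetricSpace SceneryE,
      (∀ x x' : SceneryE, m.dist x x' = sceneryDist x x') ∧
      m.toUniformSpace.toTopologicalSpace
        = (instTopologicalSpaceSubtype : TopologicalSpace SceneryE) ∧
      @CompleteSpace SceneryE m.toUniformSpace) ∧
    TopologicalSpace.SeparableSpace SceneryE ∧
    PolishSpace SceneryE := by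
  haveI hsc : SecondCountableTopology SceneryE :=
    TopologicalSpace.Subtype.secondCountableTopology _
  have hmet : ∃ m : MetricSpace SceneryE,
      (∀ x x' : SceneryE, m.dist x x' = sceneryDist x x') ∧
      m.toUniformSpace.toTopologicalSpace
        = (instTopologicalSpaceSubtype : TopologicalSpace SceneryE) ∧
      @CompleteSpace SceneryE m.toUniformSpace :=
    ⟨Stmt5Aux.sceneryMetric, fun x y => rfl, rfl, Stmt5Aux.complete'⟩
  refine ⟨hmet, ?_, ?_⟩
  · exact TopologicalSpace.SecondCountableTopology.to_separableSpace
  · exact { complete := hmet.imp (fun m hm => ⟨hm.2.1, hm.2.2⟩) }
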